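/- Let $A$ be a unital C*-algebra, let $G$ be a finite group, and let $\alpha: G \to \mathrm{Aut}(A)$ be a strictly approximately inner action. Then for $a, b \in A_+$, one has $a \precsim_A b$ if and only if $a \precsim_{C^*(G, A, \alpha)} b$, where on the right $a$ and $b$ are regarded as elements of the crossed product via the canonical inclusion. -/

import Mathlib

open Filter Topology
open scoped BigOperators

/-- Cuntz subequivalence: `a ≾ b` iff there is a sequence `(cₙ)` with `cₙ b cₙ* → a`. -/
def CuntzSub {B : Type*} [Mul B] [Star B] [TopologicalSpace B] (a b : B) : Prop :=
  ∃ c : ℕ → B, Tendsto (fun n => c n * b * star (c n)) atTop (𝓝 a)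

/-- A realization of the crossed product `C*(G, A, α)` of a finite group action. -/
structure CrossedProduct (G : Type*) [Group G] [Fintype G]
    (A B : Type*) [CStarAlgebra A] [CStarAlgebra B] (α : G → A → A) where
  ι : A →⋆ₐ[ℂ] B
  u : G → B
  u_mul : ∀ g h : G, u g * u h = u (g * h)
  u_star : ∀ g : G, star (u g) = u g⁻¹
  u_one : u 1 = 1
  ι_isometry : ∀ a : A, ‖ι a‖ = ‖a‖
  covariant : ∀ (g : G) (a : A), u g * ι a * star (u g) = ι (α g a)
  spans : ∀ b : B, ∃ f : G → A, b = ∑ g : G, ι (f g) * u g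
  coeff_norm_le : ∀ (f : G → A) (g : G), ‖f g‖ ≤ ‖∑ h : G, ι (f h) * u h‖

/-- Strict approximate innerness of an action of a finite group on a unital C*-algebra. -/
def StrictlyApproxInner {G : Type*} [Group G] {A : Type*} [CStarAlgebra A]
    (α : G → A → A) : Prop :=
  ∀ (F : Finset A) (ε : ℝ), 0 < ε → ∃ z : G →* unitary A,
    ∀ g : G, ∀ a ∈ F, ‖α g a - (z g : A) * a * star ((z g : A))‖ < ε

lemma cuntzSub_iff_approx {B : Type*} [NonUnitalNormedRing B] [StarRing B] (a b : B) :
    CuntzSub a b ↔ ∀ ε : ℝ, 0 < ε → ∃ c : B, ‖c * b * star c - a‖ < ε := by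
  constructor
  · rintro ⟨c, hc⟩ ε hε
    obtain ⟨N, hN⟩ := (Metric.tendsto_atTop.mp hc) ε hε
    exact ⟨c N, by simpa [dist_eq_norm] using hN N le_rfl⟩
  · intro h
    choose c hc using fun n : ℕ => h (1 / (n + 1)) (by positivity)
    refine ⟨c, tendsto_iff_norm_sub_tendsto_zero.mpr ?_⟩
    refine squeeze_zero (fun n => norm_nonneg _) (fun n => (hc n).le) ?_
    exact tendsto_one_div_add_atTop_nhds_zero_nat

lemma conj_aux {A : Type*} [Monoid A] [StarMul A] (U V W f1 b c : A)
    (hU : U = W * V) (hW : star W * W = 1) :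
    f1 * U * b * star V * c = f1 * ((U * b * star U) * (W * c * star W)) * W := by
  have h1 : ∀ x : A, star W * (W * x) = x := fun x => by rw [← mul_assoc, hW, one_mul]
  subst hU
  simp only [star_mul, mul_assoc, hW, mul_one, h1]

/-- Expansion of `c (ι b) c*` in the crossed product, for `c = ∑ ι (f g) u g`. -/
lemma crossed_expand {G : Type*} [Group G] [Fintype G] {A B : Type*}
    [CStarAlgebra A] [CStarAlgebra B]
    (α : G → (A ≃⋆ₐ[ℂ] A)) (cp : CrossedProduct G A B (fun g a => α g a))
    (f : G → A) (b : A) :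
    (∑ g : G, cp.ι (f g) * cp.u g) * cp.ι b * star (∑ g : G, cp.ι (f g) * cp.u g)
      = ∑ k : G, cp.ι (∑ h : G, f (k * h) * α (k * h) b * α k (star (f h))) * cp.u k := by
  have key : ∀ (g : G) (x : A), cp.u g * cp.ι x = cp.ι (α g x) * cp.u g := by
    intro g x
    have h2 : cp.u g * cp.ι x * star (cp.u g) * cp.u g = cp.ι (α g x) * cp.u g := by
      rw [cp.covariant]
    calc cp.u g * cp.ι x = cp.u g * cp.ι x * (star (cp.u g) * cp.u g) := by
          rw [cp.u_star, cp.u_mul, inv_mul_cancel, cp.u_one, mul_one]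
      _ = cp.ι (α g x) * cp.u g := by rw [← mul_assoc]; exact h2
  have key' : ∀ (g : G) (x : A) (y : B),
      cp.u g * (cp.ι x * y) = cp.ι (α g x) * (cp.u g * y) := fun g x y => by
    rw [← mul_assoc, key, mul_assoc]
  have umul' : ∀ (g h : G) (y : B), cp.u g * (cp.u h * y) = cp.u (g * h) * y :=
    fun g h y => by rw [← mul_assoc, cp.u_mul]
  have imul' : ∀ (x y : A) (z : B), cp.ι x * (cp.ι y * z) = cp.ι (x * y) * z :=
    fun x y z => by rw [← mul_assoc, ← map_mul]
  have hstarc : star (∑ g : G, cp.ι (f g) * cp.u g)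
      = ∑ h : G, cp.u h⁻¹ * cp.ι (star (f h)) := by
    rw [star_sum]
    exact Finset.sum_congr rfl fun h _ => by rw [star_mul, cp.u_star, map_star]
  rw [hstarc, Finset.sum_mul, Finset.sum_mul_sum]
  have hterm : ∀ g h : G, cp.ι (f g) * cp.u g * cp.ι b * (cp.u h⁻¹ * cp.ι (star (f h)))
      = cp.ι (f g * (α g b * α (g * h⁻¹) (star (f h)))) * cp.u (g * h⁻¹) := by
    intro g h
    simp only [mul_assoc]
    rw [key', umul', key, imul', imul', mul_assoc]
  calc ∑ g : G, ∑ h : G, cp.ι (f g) * cp.u g * cp.ι b * (cp.u h⁻¹ * cp.ι (star (f h)))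
      = ∑ g : G, ∑ h : G,
          cp.ι (f g * (α g b * α (g * h⁻¹) (star (f h)))) * cp.u (g * h⁻¹) :=
        Finset.sum_congr rfl fun g _ => Finset.sum_congr rfl fun h _ => hterm g h
    _ = ∑ h : G, ∑ g : G,
          cp.ι (f g * (α g b * α (g * h⁻¹) (star (f h)))) * cp.u (g * h⁻¹) :=
        Finset.sum_comm
    _ = ∑ h : G, ∑ k : G,
          cp.ι (f (k * h) * (α (k * h) b * α (k * h * h⁻¹) (star (f h)))) * cp.u (k * h * h⁻¹) := by
        refine Finset.sum_congr rfl fun h _ => ?_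
        exact (Fintype.sum_equiv (Equiv.mulRight h) _ _ (fun k => by simp)).symm
    _ = ∑ k : G, ∑ h : G,
          cp.ι (f (k * h) * (α (k * h) b * α (k * h * h⁻¹) (star (f h)))) * cp.u (k * h * h⁻¹) :=
        Finset.sum_comm
    _ = ∑ k : G, cp.ι (∑ h : G, f (k * h) * α (k * h) b * α k (star (f h))) * cp.u k := by
        refine Finset.sum_congr rfl fun k _ => ?_
        rw [map_sum, Finset.sum_mul]
        refine Finset.sum_congr rfl fun h _ => ?_
        rw [mul_inv_cancel_right, mul_assoc]

/-- Norm estimate: replacing the crossed-product unitaries by approximating inner unitaries. -/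
lemma approx_sum_bound {G : Type*} [Group G] [Fintype G] {A : Type*} [CStarAlgebra A]
    (α : G → (A ≃⋆ₐ[ℂ] A)) (f : G → A) (b : A) (z : G →* unitary A) (ε' C : ℝ)
    (hε'0 : 0 ≤ ε')
    (hzb : ∀ g : G, ‖α g b - (z g : A) * b * star ((z g : A))‖ < ε')
    (hzf : ∀ g h : G, ‖α g (star (f h)) - (z g : A) * star (f h) * star ((z g : A))‖ < ε')
    (hCf : ∀ g : G, ‖f g‖ ≤ C) (hCb : ‖b‖ + ε' ≤ C) :
    ‖(∑ g : G, f g * ((z g : A))) * b * star (∑ g : G, f g * ((z g : A)))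
      - ∑ k : G, (∑ h : G, f (k * h) * α (k * h) b * α k (star (f h))) * ((z k : A))‖
      ≤ (Fintype.card G : ℝ) ^ 2 * (2 * C ^ 2 * ε') := by
  have hC0 : 0 ≤ C := le_trans (norm_nonneg (f 1)) (hCf 1)
  have hzmul : ∀ g h : G, ((z (g * h) : A)) = (z g : A) * (z h : A) := by
    intro g h; rw [map_mul]; rfl
  have hWW : ∀ k : G, star ((z k : A)) * (z k : A) = 1 := by
    intro k; rw [← Unitary.coe_star]; exact Unitary.coe_star_mul_self (z k)
  have hnormconj : ∀ (k : G) (y : A), ‖(z k : A) * y * star ((z k : A))‖ = ‖y‖ := by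
    intro k y
    rw [← Unitary.coe_star, CStarRing.norm_mul_coe_unitary, CStarRing.norm_coe_unitary_mul]
  have hstard : star (∑ g : G, f g * ((z g : A)))
      = ∑ h : G, star ((z h : A)) * star (f h) := by
    rw [star_sum]; exact Finset.sum_congr rfl fun h _ => star_mul _ _
  have hre : ∀ T : G → G → A, ∑ g : G, ∑ h : G, T g h = ∑ k : G, ∑ h : G, T (k * h) h := by
    intro T
    calc ∑ g : G, ∑ h : G, T g h = ∑ h : G, ∑ g : G, T g h := Finset.sum_comm
      _ = ∑ h : G, ∑ k : G, T (k * h) h := Finset.sum_congr rfl fun h _ =>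
          (Fintype.sum_equiv (Equiv.mulRight h) _ _ (fun k => by simp)).symm
      _ = ∑ k : G, ∑ h : G, T (k * h) h := Finset.sum_comm
  have hL : (∑ g : G, f g * ((z g : A))) * b * star (∑ g : G, f g * ((z g : A)))
      = ∑ k : G, ∑ h : G,
          f (k * h) * ((z (k * h) : A)) * b * (star ((z h : A)) * star (f h)) := by
    rw [hstard, Finset.sum_mul, Finset.sum_mul_sum]
    exact hre (fun g h => f g * ((z g : A)) * b * (star ((z h : A)) * star (f h)))
  have hR : ∑ k : G, (∑ h : G, f (k * h) * α (k * h) b * α k (star (f h))) * ((z k : A))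
      = ∑ k : G, ∑ h : G, f (k * h) * α (k * h) b * α k (star (f h)) * ((z k : A)) :=
    Finset.sum_congr rfl fun k _ => Finset.sum_mul _ _ _
  -- per-term estimate
  have hterm : ∀ k h : G,
      ‖f (k * h) * ((z (k * h) : A)) * b * (star ((z h : A)) * star (f h))
        - f (k * h) * α (k * h) b * α k (star (f h)) * ((z k : A))‖ ≤ 2 * C ^ 2 * ε' := by
    intro k h
    have e1 : f (k * h) * ((z (k * h) : A)) * b * (star ((z h : A)) * star (f h))
        = f (k * h) * ((((z (k * h) : A)) * b * star ((z (k * h) : A)))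
            * (((z k : A)) * star (f h) * star ((z k : A)))) * ((z k : A)) := by
      rw [← mul_assoc]
      exact conj_aux _ _ _ _ _ _ (hzmul k h) (hWW k)
    have e2 : f (k * h) * α (k * h) b * α k (star (f h)) * ((z k : A))
        = f (k * h) * (α (k * h) b * α k (star (f h))) * ((z k : A)) := by
      rw [mul_assoc (f (k * h))]
    rw [e1, e2, ← sub_mul, ← mul_sub, CStarRing.norm_mul_coe_unitary]
    set P : A := ((z (k * h) : A)) * b * star ((z (k * h) : A)) with hP
    set Q : A := ((z k : A)) * star (f h) * star ((z k : A)) with hQ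
    set P' : A := α (k * h) b with hP'
    set Q' : A := α k (star (f h)) with hQ'
    have hsplit : P * Q - P' * Q' = (P - P') * Q + P' * (Q - Q') := by noncomm_ring
    have hPP' : ‖P - P'‖ ≤ ε' := by rw [norm_sub_rev]; exact (hzb (k * h)).le
    have hQQ' : ‖Q - Q'‖ ≤ ε' := by rw [norm_sub_rev]; exact (hzf k h).le
    have hQn : ‖Q‖ = ‖f h‖ := by rw [hQ, hnormconj, norm_star]
    have hPn : ‖P‖ = ‖b‖ := by rw [hP, hnormconj]
    have hP'n : ‖P'‖ ≤ C := by
      have h3 := norm_sub_norm_le P' P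
      rw [norm_sub_rev] at h3
      linarith
    have hfh : ‖f h‖ ≤ C := hCf h
    have hmid : ‖P * Q - P' * Q'‖ ≤ 2 * C * ε' := by
      rw [hsplit]
      calc ‖(P - P') * Q + P' * (Q - Q')‖
          ≤ ‖(P - P') * Q‖ + ‖P' * (Q - Q')‖ := norm_add_le _ _
        _ ≤ ‖P - P'‖ * ‖Q‖ + ‖P'‖ * ‖Q - Q'‖ :=
            add_le_add (norm_mul_le _ _) (norm_mul_le _ _)
        _ ≤ ε' * C + C * ε' := by
            have h4 : ‖Q‖ ≤ C := by rw [hQn]; exact hfh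
            have h5 : (0:ℝ) ≤ ‖Q‖ := norm_nonneg _
            have h6 : (0:ℝ) ≤ ‖P - P'‖ := norm_nonneg _
            have h7 : (0:ℝ) ≤ ‖P'‖ := norm_nonneg _
            have h8 : (0:ℝ) ≤ ‖Q - Q'‖ := norm_nonneg _
            nlinarith
        _ = 2 * C * ε' := by ring
    calc ‖f (k * h) * (P * Q - P' * Q')‖
        ≤ ‖f (k * h)‖ * ‖P * Q - P' * Q'‖ := norm_mul_le _ _
      _ ≤ C * (2 * C * ε') := by
          have h9 : (0:ℝ) ≤ ‖f (k * h)‖ := norm_nonneg _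
          have h10 := hCf (k * h)
          have h11 : (0:ℝ) ≤ ‖P * Q - P' * Q'‖ := norm_nonneg _
          nlinarith
      _ = 2 * C ^ 2 * ε' := by ring
  have hper : ∀ k : G,
      ‖(∑ h : G, f (k * h) * ((z (k * h) : A)) * b * (star ((z h : A)) * star (f h)))
        - ∑ h : G, f (k * h) * α (k * h) b * α k (star (f h)) * ((z k : A))‖
        ≤ (Fintype.card G : ℝ) * (2 * C ^ 2 * ε') := by
    intro k
    rw [← Finset.sum_sub_distrib]
    refine le_trans (norm_sum_le _ _) ?_
    refine le_trans (Finset.sum_le_sum fun h _ => hterm k h) ?_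
    rw [Finset.sum_const, Finset.card_univ, nsmul_eq_mul]
  rw [hL, hR, ← Finset.sum_sub_distrib]
  refine le_trans (norm_sum_le _ _) ?_
  refine le_trans (Finset.sum_le_sum fun k _ => hper k) ?_
  rw [Finset.sum_const, Finset.card_univ, nsmul_eq_mul]
  ring_nf
  exact le_refl _

/-- Let `α` be a strictly approximately inner action of a finite group `G`
on a unital C*-algebra `A`.  For `a, b ∈ A₊`, one has `a ≾_A b` iff
`a ≾_{C*(G,A,α)} b` via the canonical inclusion. -/
theorem cuntzSub_iff_cuntzSub_crossedProduct
    {G : Type*} [Group G] [Fintype G] {A B : Type*} [CStarAlgebra A] [CStarAlgebra B]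
    [PartialOrder A] [StarOrderedRing A]
    (α : G → (A ≃⋆ₐ[ℂ] A))
    (hα : ∀ (g h : G) (a : A), α (g * h) a = α g (α h a))
    (cp : CrossedProduct G A B (fun g a => α g a))
    (hsai : StrictlyApproxInner (fun g a => α g a))
    (a b : A) (ha : 0 ≤ a) (hb : 0 ≤ b) :
    CuntzSub a b ↔ CuntzSub (cp.ι a) (cp.ι b) := by
  classical
  rw [cuntzSub_iff_approx, cuntzSub_iff_approx]
  constructor
  · intro h ε hε
    obtain ⟨c, hc⟩ := h ε hε
    refine ⟨cp.ι c, ?_⟩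
    have h1 : cp.ι c * cp.ι b * star (cp.ι c) - cp.ι a = cp.ι (c * b * star c - a) := by
      rw [map_sub, map_mul, map_mul, map_star]
    rw [h1, cp.ι_isometry]
    exact hc
  · intro h ε hε
    have hNr : (1:ℝ) ≤ (Fintype.card G : ℝ) := by
      have h1 : (1:ℕ) ≤ Fintype.card G := Fintype.card_pos
      exact_mod_cast h1
    have hNr0 : (0:ℝ) < (Fintype.card G : ℝ) := lt_of_lt_of_le one_pos hNr
    obtain ⟨c, hc⟩ := h (ε / (2 * (Fintype.card G : ℝ))) (by positivity)
    obtain ⟨f, hf⟩ := cp.spans c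
    -- coefficient bounds in the crossed product
    have hccc : c * cp.ι b * star c
        = ∑ k : G, cp.ι (∑ h : G, f (k * h) * α (k * h) b * α k (star (f h))) * cp.u k := by
      rw [hf]; exact crossed_expand α cp f b
    have h2B : ∑ k : G, cp.ι (if k = 1 then a else 0) * cp.u k = cp.ι a := by
      rw [Finset.sum_eq_single 1 (fun k _ hk => by rw [if_neg hk, map_zero, zero_mul])
        (fun hk => absurd (Finset.mem_univ 1) hk)]
      rw [if_pos rfl, cp.u_one, mul_one]
    have hsub : c * cp.ι b * star c - cp.ι a
        = ∑ k : G, cp.ι ((∑ h : G, f (k * h) * α (k * h) b * α k (star (f h)))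
            - if k = 1 then a else 0) * cp.u k := by
      rw [hccc, ← h2B, ← Finset.sum_sub_distrib]
      exact Finset.sum_congr rfl fun k _ => by rw [map_sub, sub_mul]
    have hcoef : ∀ k : G,
        ‖(∑ h : G, f (k * h) * α (k * h) b * α k (star (f h))) - if k = 1 then a else 0‖
          ≤ ε / (2 * (Fintype.card G : ℝ)) := by
      intro k
      calc ‖(∑ h : G, f (k * h) * α (k * h) b * α k (star (f h))) - if k = 1 then a else 0‖
          ≤ ‖∑ j : G, cp.ι ((∑ h : G, f (j * h) * α (j * h) b * α j (star (f h)))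
              - if j = 1 then a else 0) * cp.u j‖ :=
            cp.coeff_norm_le (fun k => (∑ h : G, f (k * h) * α (k * h) b * α k (star (f h)))
              - if k = 1 then a else 0) k
        _ = ‖c * cp.ι b * star c - cp.ι a‖ := by rw [← hsub]
        _ ≤ ε / (2 * (Fintype.card G : ℝ)) := hc.le
    -- constants
    have hsumn : (0:ℝ) ≤ ∑ g : G, ‖f g‖ := Finset.sum_nonneg fun g _ => norm_nonneg _
    have hCf : ∀ g : G, ‖f g‖ ≤ (∑ g : G, ‖f g‖) + ‖b‖ + 1 := by
      intro g
      have h1 := Finset.single_le_sum (f := fun g : G => ‖f g‖)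
        (fun i _ => norm_nonneg _) (Finset.mem_univ g)
      have h2 := norm_nonneg b
      linarith
    have hC1 : (1:ℝ) ≤ (∑ g : G, ‖f g‖) + ‖b‖ + 1 := by
      have h2 := norm_nonneg b; linarith
    set C : ℝ := (∑ g : G, ‖f g‖) + ‖b‖ + 1 with hCdef
    have hC0 : (0:ℝ) < C := lt_of_lt_of_le one_pos hC1
    have hden : (0:ℝ) < 8 * (Fintype.card G : ℝ) ^ 2 * C ^ 2 :=
      mul_pos (mul_pos (by norm_num) (pow_pos hNr0 2)) (pow_pos hC0 2)
    set ε' : ℝ := min 1 (ε / (8 * (Fintype.card G : ℝ) ^ 2 * C ^ 2)) with hε'def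
    have hε'pos : 0 < ε' := lt_min one_pos (div_pos hε hden)
    have hε'1 : ε' ≤ 1 := min_le_left _ _
    have hε'le : ε' ≤ ε / (8 * (Fintype.card G : ℝ) ^ 2 * C ^ 2) := min_le_right _ _
    have hCb : ‖b‖ + ε' ≤ C := by
      rw [hCdef]; linarith
    -- the approximating unitaries
    obtain ⟨z, hz⟩ := hsai (insert b (Finset.image (fun h => star (f h)) Finset.univ)) ε' hε'pos
    have hzb : ∀ g : G, ‖α g b - (z g : A) * b * star ((z g : A))‖ < ε' :=
      fun g => hz g b (Finset.mem_insert_self _ _)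
    have hzf : ∀ g h : G, ‖α g (star (f h)) - (z g : A) * star (f h) * star ((z g : A))‖ < ε' :=
      fun g h => hz g (star (f h))
        (Finset.mem_insert_of_mem (Finset.mem_image_of_mem _ (Finset.mem_univ h)))
    have hzone : ((z (1:G) : A)) = 1 := by rw [map_one]; rfl
    refine ⟨∑ g : G, f g * ((z g : A)), ?_⟩
    have hbound := approx_sum_bound α f b z ε' C hε'pos.le hzb hzf hCf hCb
    -- bound on ‖S - a‖
    have h2A : ∑ k : G, (if k = 1 then a else 0) * ((z k : A)) = a := by
      rw [Finset.sum_eq_single 1 (fun k _ hk => by rw [if_neg hk, zero_mul])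
        (fun hk => absurd (Finset.mem_univ 1) hk)]
      rw [if_pos rfl, hzone, mul_one]
    have hSa : (∑ k : G, (∑ h : G, f (k * h) * α (k * h) b * α k (star (f h))) * ((z k : A))) - a
        = ∑ k : G, ((∑ h : G, f (k * h) * α (k * h) b * α k (star (f h)))
            - if k = 1 then a else 0) * ((z k : A)) := by
      refine Eq.symm ?_
      calc ∑ k : G, ((∑ h : G, f (k * h) * α (k * h) b * α k (star (f h)))
              - if k = 1 then a else 0) * ((z k : A))
          = ∑ k : G, ((∑ h : G, f (k * h) * α (k * h) b * α k (star (f h))) * ((z k : A))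
              - (if k = 1 then a else 0) * ((z k : A))) :=
            Finset.sum_congr rfl fun k _ => sub_mul _ _ _
        _ = (∑ k : G, (∑ h : G, f (k * h) * α (k * h) b * α k (star (f h))) * ((z k : A)))
              - ∑ k : G, (if k = 1 then a else 0) * ((z k : A)) := Finset.sum_sub_distrib _ _
        _ = (∑ k : G, (∑ h : G, f (k * h) * α (k * h) b * α k (star (f h))) * ((z k : A))) - a := by
            rw [h2A]
    have hSabound :
        ‖(∑ k : G, (∑ h : G, f (k * h) * α (k * h) b * α k (star (f h))) * ((z k : A))) - a‖
          ≤ (Fintype.card G : ℝ) * (ε / (2 * (Fintype.card G : ℝ))) := by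
      rw [hSa]
      refine le_trans (norm_sum_le _ _) ?_
      refine le_trans (Finset.sum_le_sum
        (g := fun _ : G => ε / (2 * (Fintype.card G : ℝ))) (fun k _ => ?_)) ?_
      · show ‖((∑ h : G, f (k * h) * α (k * h) b * α k (star (f h)))
            - if k = 1 then a else 0) * ((z k : A))‖ ≤ ε / (2 * (Fintype.card G : ℝ))
        rw [CStarRing.norm_mul_coe_unitary]
        exact hcoef k
      · rw [Finset.sum_const, Finset.card_univ, nsmul_eq_mul]
    -- final estimate
    have htri := dist_triangle
      ((∑ g : G, f g * ((z g : A))) * b * star (∑ g : G, f g * ((z g : A))))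
      (∑ k : G, (∑ h : G, f (k * h) * α (k * h) b * α k (star (f h))) * ((z k : A))) a
    rw [dist_eq_norm, dist_eq_norm, dist_eq_norm] at htri
    have e1 : (Fintype.card G : ℝ) * (ε / (2 * (Fintype.card G : ℝ))) = ε / 2 := by
      field_simp
    have hC0' : C ≠ 0 := ne_of_gt hC0
    have hN0' : (Fintype.card G : ℝ) ≠ 0 := ne_of_gt hNr0
    have e2 : (Fintype.card G : ℝ) ^ 2 * (2 * C ^ 2 * (ε / (8 * (Fintype.card G : ℝ) ^ 2 * C ^ 2)))
        = ε / 4 := by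
      field_simp
      ring
    have e3 : (Fintype.card G : ℝ) ^ 2 * (2 * C ^ 2 * ε') ≤ ε / 4 := by
      calc (Fintype.card G : ℝ) ^ 2 * (2 * C ^ 2 * ε')
          ≤ (Fintype.card G : ℝ) ^ 2 * (2 * C ^ 2 * (ε / (8 * (Fintype.card G : ℝ) ^ 2 * C ^ 2))) := by
            gcongr
        _ = ε / 4 := e2
    have hfinal := le_trans htri
      (add_le_add (le_trans hbound e3) (le_trans hSabound (le_of_eq e1)))
    linarith
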